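/- Fix integers n ≥ 4 and l with 1 ≤ l and l + 2 ≤ n, and let Δp be as defined below. Let x < y < z be real numbers, let v₁ ≤ v₂ ≤ … ≤ v_n be real numbers with v_l = v_{l+1} = v_{l+2} = y, and let f_x, f_z : ℝ → ℝ each be concave on [0,∞) and nonincreasing on [0,∞). Then at least one of the following holds: ∑_{i=1}^{n} Δp(i)·f_x(|x − v_i|) ≥ 0, or ∑_{i=1}^{n} Δp(i)·f_z(|z − v_i|) ≥ 0. -/

import Mathlib

open Finset

/-- head sums of binomial rows -/
private def hdsum (m k : ℕ) : ℕ := ∑ j ∈ range k, m.choose j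

private lemma hdsum_pascal (m k : ℕ) : hdsum (m+1) (k+1) = hdsum m (k+1) + hdsum m k := by
  induction k with
  | zero => simp [hdsum]
  | succ k ih =>
    have h1 : hdsum (m+1) (k+1+1) = hdsum (m+1) (k+1) + (m+1).choose (k+1) := by
      simp [hdsum, sum_range_succ]
    have h2 : hdsum m (k+1+1) = hdsum m (k+1) + m.choose (k+1) := by
      simp [hdsum, sum_range_succ]
    have h3 : hdsum m (k+1) = hdsum m k + m.choose k := by
      simp [hdsum, sum_range_succ]
    have h4 : (m+1).choose (k+1) = m.choose k + m.choose (k+1) := Nat.choose_succ_succ m k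
    omega

private lemma hdsum_mono (m : ℕ) {k k' : ℕ} (h : k ≤ k') : hdsum m k ≤ hdsum m k' :=
  Finset.sum_le_sum_of_subset (Finset.range_subset_range.2 h)

private lemma hdsum_le (m k : ℕ) : hdsum (m+1) k ≤ 2 * hdsum m k := by
  cases k with
  | zero => simp [hdsum]
  | succ k =>
    rw [hdsum_pascal]
    have := hdsum_mono m (show k ≤ k+1 by omega)
    omega

private lemma hdsum_ge (m k : ℕ) : 2 * hdsum m k ≤ hdsum (m+1) (k+1) := by
  rw [hdsum_pascal]
  have := hdsum_mono m (show k ≤ k+1 by omega)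
  omega

private lemma hdsum3_le (m k : ℕ) : hdsum (m+3) k ≤ 8 * hdsum m k := by
  have h1 : hdsum (m+3) k ≤ 2 * hdsum (m+2) k := hdsum_le (m+2) k
  have h2 : hdsum (m+2) k ≤ 2 * hdsum (m+1) k := hdsum_le (m+1) k
  have h3 := hdsum_le m k
  omega

private lemma hdsum3_ge (m k : ℕ) : 8 * hdsum m k ≤ hdsum (m+3) (k+3) := by
  have h1 := hdsum_ge m k
  have h2 : 2 * hdsum (m+1) (k+1) ≤ hdsum (m+2) (k+2) := hdsum_ge (m+1) (k+1)
  have h3 : 2 * hdsum (m+2) (k+2) ≤ hdsum (m+3) (k+3) := hdsum_ge (m+2) (k+2)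
  omega

private lemma hdsum_full (m : ℕ) : hdsum m (m+1) = 2^m := Nat.sum_range_choose m

private lemma hdsum_window (M s t : ℕ) :
    hdsum M s + ∑ j ∈ range t, M.choose (s+j) = hdsum M (s+t) := by
  induction t with
  | zero => simp [hdsum]
  | succ t ih =>
    have h2 : hdsum M (s+(t+1)) = hdsum M (s+t) + M.choose (s+t) := by
      show hdsum M ((s+t)+1) = _
      simp [hdsum, sum_range_succ]
    rw [sum_range_succ, h2]
    omega

private lemma sum_Ioc_eq_range (f : ℕ → ℝ) (a b : ℕ) :
    ∑ i ∈ Ioc a b, f i = ∑ j ∈ range (b - a), f (a + 1 + j) := by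
  have h : Ioc a b = Ico (a+1) (b+1) := by ext i; simp
  rw [h, sum_Ico_eq_sum_range]
  have h2 : b + 1 - (a+1) = b - a := by omega
  rw [h2]

/-- three point concavity for t ↦ f |w - t| (product form, no division in statement) -/
private lemma conc3 (f : ℝ → ℝ) (hc : ConcaveOn ℝ (Set.Ici (0:ℝ)) f)
    (ha : AntitoneOn f (Set.Ici (0:ℝ))) (w : ℝ) {p q r : ℝ} (hpq : p ≤ q) (hqr : q ≤ r) :
    (r - q) * f |w - p| + (q - p) * f |w - r| ≤ (r - p) * f |w - q| := by
  rcases eq_or_lt_of_le (hpq.trans hqr) with h | h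
  · have hq : q = p := le_antisymm (h ▸ hqr) hpq
    subst hq
    have : r = q := h.symm
    subst this
    simp
  · set a : ℝ := (r - q) / (r - p) with hadef
    set b : ℝ := (q - p) / (r - p) with hbdef
    have hrp : (0:ℝ) < r - p := by linarith
    have ha0 : 0 ≤ a := by
      apply div_nonneg <;> linarith
    have hb0 : 0 ≤ b := by
      apply div_nonneg <;> linarith
    have hab : a + b = 1 := by
      rw [hadef, hbdef, ← add_div]
      rw [show r - q + (q - p) = r - p by ring]
      exact div_self (ne_of_gt hrp)
    have hmemp : |w - p| ∈ Set.Ici (0:ℝ) := Set.mem_Ici.2 (abs_nonneg _)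
    have hmemr : |w - r| ∈ Set.Ici (0:ℝ) := Set.mem_Ici.2 (abs_nonneg _)
    have hmix : a * |w - p| + b * |w - r| ∈ Set.Ici (0:ℝ) := by
      have := mul_nonneg ha0 (abs_nonneg (w-p))
      have := mul_nonneg hb0 (abs_nonneg (w-r))
      simp only [Set.mem_Ici]; linarith
    have hcomb : a * (w - p) + b * (w - r) = w - q := by
      rw [hadef, hbdef]; field_simp; ring
    have hle : |w - q| ≤ a * |w - p| + b * |w - r| := by
      calc |w - q| = |a * (w - p) + b * (w - r)| := by rw [hcomb]
        _ ≤ |a * (w - p)| + |b * (w - r)| := abs_add_le _ _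
        _ = a * |w - p| + b * |w - r| := by
            rw [abs_mul, abs_mul, abs_of_nonneg ha0, abs_of_nonneg hb0]
    have h1 : f (a * |w - p| + b * |w - r|) ≤ f |w - q| :=
      ha (Set.mem_Ici.2 (abs_nonneg _)) hmix hle
    have h2 : a * f |w - p| + b * f |w - r| ≤ f (a * |w - p| + b * |w - r|) := by
      have := hc.2 hmemp hmemr ha0 hb0 hab
      simpa using this
    have h3 : a * f |w - p| + b * f |w - r| ≤ f |w - q| := h2.trans h1
    have e1 : r - q = a * (r - p) := by rw [hadef]; field_simp
    have e2 : q - p = b * (r - p) := by rw [hbdef]; field_simp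
    calc (r - q) * f |w - p| + (q - p) * f |w - r|
        = (r - p) * (a * f |w - p| + b * f |w - r|) := by rw [e1, e2]; ring
      _ ≤ (r - p) * f |w - q| := by
          apply mul_le_mul_of_nonneg_left h3 (le_of_lt hrp)

/-- four point concavity, product form -/
private lemma conc4 (f : ℝ → ℝ) (hc : ConcaveOn ℝ (Set.Ici (0:ℝ)) f)
    (ha : AntitoneOn f (Set.Ici (0:ℝ))) (w : ℝ) {a b c d : ℝ}
    (hab : a ≤ b) (hbc : b ≤ c) (hcd : c ≤ d) :
    (f |w - d| - f |w - c|) * (b - a) ≤ (f |w - b| - f |w - a|) * (d - c) := by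
  rcases eq_or_lt_of_le hbc with h | h
  · subst h
    have := conc3 f hc ha w hab hcd
    nlinarith [this]
  · have S1 := conc3 f hc ha w hab (le_of_lt h)
    have S2 := conc3 f hc ha w (le_of_lt h) hcd
    nlinarith [S1, S2, mul_nonneg (sub_nonneg.2 hab) (sub_nonneg.2 hcd)]

/-- Abel summation over Ioc 0 (N+1) when total mass is zero -/
private lemma abel_sum (N : ℕ) (F g : ℕ → ℝ) (h0 : ∑ i ∈ Ioc 0 (N+1), F i = 0) :
    ∑ i ∈ Ioc 0 (N+1), F i * g i
      = ∑ k ∈ Ioc 0 N, (∑ i ∈ Ioc k (N+1), F i) * (g (k+1) - g k) := by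
  have step1 : ∀ k ∈ Ioc 0 N, (∑ i ∈ Ioc k (N+1), F i) * (g (k+1) - g k)
      = ∑ i ∈ Ioc 0 (N+1), (if k < i then F i * (g (k+1) - g k) else 0) := by
    intro k hk
    simp only [mem_Ioc] at hk
    rw [sum_mul, ← sum_filter]
    congr 1
    ext i
    simp only [mem_Ioc, mem_filter]
    omega
  rw [sum_congr rfl step1, sum_comm]
  have step2 : ∀ i ∈ Ioc 0 (N+1), (∑ k ∈ Ioc 0 N, if k < i then F i * (g (k+1) - g k) else 0)
      = F i * (g i - g 1) := by
    intro i hi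
    simp only [mem_Ioc] at hi
    rw [← sum_filter]
    have hfe : filter (fun k => k < i) (Ioc 0 N) = Ioc 0 (i-1) := by
      ext k
      simp only [mem_Ioc, mem_filter]
      omega
    rw [hfe, ← mul_sum]
    congr 1
    rw [sum_Ioc_eq_range]
    simp only [Nat.sub_zero]
    have htel := Finset.sum_range_sub (fun j => g (1+j)) (i-1)
    have hre : ∀ j ∈ range (i-1), g (0+1+j+1) - g (0+1+j) = g (1+(j+1)) - g (1+j) := by
      intro j _
      congr 2 <;> omega
    rw [sum_congr rfl hre, htel]
    have : 1 + (i-1) = i := by omega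
    rw [this]
  rw [sum_congr rfl step2]
  have : ∀ i ∈ Ioc 0 (N+1), F i * (g i - g 1) = F i * g i - F i * g 1 := by
    intro i _; ring
  rw [sum_congr rfl this, sum_sub_distrib, ← sum_mul, h0]
  ring

/-- the core transfer lemma -/
private lemma core (K : Finset ℕ) (P : ℕ → Prop) [DecidablePred P] (aa δ dv : ℕ → ℝ)
    (hdv : ∀ k ∈ K, 0 ≤ dv k)
    (hz : ∀ k ∈ K, dv k = 0 → δ k = 0)
    (hLa : ∀ k ∈ K, P k → 0 ≤ aa k)
    (hLd : ∀ k ∈ K, P k → 0 ≤ δ k)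
    (hRa : ∀ k ∈ K, ¬ P k → aa k ≤ 0)
    (hpair : ∀ k ∈ K, P k → ∀ j ∈ K, ¬ P j → δ j * dv k ≤ δ k * dv j)
    (hsum : 0 ≤ ∑ k ∈ K, aa k * dv k) :
    0 ≤ ∑ k ∈ K, aa k * δ k := by
  classical
  set L := K.filter P with hL
  set R := K.filter (fun k => ¬ P k) with hR
  have hmemL : ∀ k ∈ L, k ∈ K ∧ P k := by intro k hk; simpa [hL] using hk
  have hmemR : ∀ k ∈ R, k ∈ K ∧ ¬ P k := by intro k hk; simpa [hR] using hk
  set SL := ∑ k ∈ L, aa k * δ k with hSL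
  set X := ∑ j ∈ R, (- aa j) * δ j with hX
  set A := ∑ k ∈ L, aa k * dv k with hA
  set B := ∑ j ∈ R, (- aa j) * dv j with hB
  have hsplit : ∀ (h : ℕ → ℝ), ∑ k ∈ K, h k = ∑ k ∈ L, h k + ∑ k ∈ R, h k := by
    intro h
    rw [hL, hR, sum_filter_add_sum_filter_not]
  have hgoal : ∑ k ∈ K, aa k * δ k = SL - X := by
    rw [hsplit (fun k => aa k * δ k), hSL, hX]
    have : ∑ j ∈ R, -aa j * δ j = - ∑ j ∈ R, aa j * δ j := by simp [neg_mul]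
    rw [this]; ring
  have hsum' : 0 ≤ A - B := by
    have := hsplit (fun k => aa k * dv k)
    rw [this] at hsum
    have hBeq : ∑ k ∈ R, aa k * dv k = - B := by
      rw [hB]
      have : ∑ j ∈ R, -aa j * dv j = - ∑ j ∈ R, aa j * dv j := by simp [neg_mul]
      rw [this, neg_neg]
    rw [hBeq] at hsum
    linarith
  have h1 : 0 ≤ SL := by
    apply sum_nonneg
    intro k hk
    obtain ⟨hkK, hkP⟩ := hmemL k hk
    exact mul_nonneg (hLa k hkK hkP) (hLd k hkK hkP)
  have h2 : 0 ≤ A := by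
    apply sum_nonneg
    intro k hk
    obtain ⟨hkK, hkP⟩ := hmemL k hk
    exact mul_nonneg (hLa k hkK hkP) (hdv k hkK)
  have h3 : 0 ≤ B := by
    apply sum_nonneg
    intro j hj
    obtain ⟨hjK, hjP⟩ := hmemR j hj
    exact mul_nonneg (by linarith [hRa j hjK hjP]) (hdv j hjK)
  have key : X * A ≤ SL * B := by
    rw [hX, hA, hSL, hB, sum_mul_sum, sum_mul_sum]
    rw [sum_comm (s := R) (t := L)]
    apply sum_le_sum
    intro k hk
    apply sum_le_sum
    intro j hj
    obtain ⟨hkK, hkP⟩ := hmemL k hk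
    obtain ⟨hjK, hjP⟩ := hmemR j hj
    have hc : 0 ≤ (- aa j) * aa k :=
      mul_nonneg (by linarith [hRa j hjK hjP]) (hLa k hkK hkP)
    have := mul_le_mul_of_nonneg_left (hpair k hkK hkP j hjK hjP) hc
    nlinarith [this]
  rw [hgoal]
  by_cases hXpos : X ≤ 0
  · linarith
  · push_neg at hXpos
    by_cases hApos : 0 < A
    · have k2 : SL * B ≤ SL * A := mul_le_mul_of_nonneg_left (by linarith) h1
      have k3 : X * A ≤ SL * A := le_trans key k2
      have k4 : X ≤ SL := le_of_mul_le_mul_right (by linarith [k3]) hApos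
      linarith
    · exfalso
      have hA0 : A = 0 := le_antisymm (by linarith) h2
      have hB0 : B = 0 := le_antisymm (by linarith) h3
      have hterm : ∀ j ∈ R, (- aa j) * dv j = 0 := by
        have := (Finset.sum_eq_zero_iff_of_nonneg (fun j hj => by
          obtain ⟨hjK, hjP⟩ := hmemR j hj
          exact mul_nonneg (by linarith [hRa j hjK hjP]) (hdv j hjK))).1 hB0
        exact this
      have hX0 : X = 0 := by
        rw [hX]
        apply sum_eq_zero
        intro j hj
        obtain ⟨hjK, hjP⟩ := hmemR j hj
        rcases mul_eq_zero.1 (hterm j hj) with h | h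
        · rw [h, zero_mul]
        · rw [hz j hjK h, mul_zero]
      linarith

private lemma sum_choose_Ioc (M a b c : ℕ) (hca : c ≤ a + 1) (hab : a ≤ b) :
    ∑ i ∈ Ioc a b, ((M.choose (i - c) : ℝ)) = (hdsum M (b+1-c) : ℝ) - (hdsum M (a+1-c) : ℝ) := by
  rw [sum_Ioc_eq_range]
  have h1 : ∀ j ∈ range (b-a), ((M.choose (a+1+j-c) : ℝ)) = ((M.choose ((a+1-c)+j) : ℝ)) := by
    intro j _
    congr 2
    omega
  rw [sum_congr rfl h1]
  have hw := hdsum_window M (a+1-c) (b-a)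
  have he : (a+1-c) + (b-a) = b+1-c := by omega
  rw [he] at hw
  have hcast := congrArg (fun t : ℕ => (t : ℝ)) hw
  push_cast at hcast ⊢
  linarith [hcast]

theorem existence_lemma
    (n l : ℕ) (hn : 4 ≤ n) (hl : 1 ≤ l) (hln : l + 2 ≤ n)
    (Δp : ℕ → ℝ)
    (hΔp₁ : ∀ i : ℕ, 1 ≤ i → i ≤ l - 1 →
      Δp i = (1 / 2 : ℝ) ^ (n - 1) * ((n - 1).choose (i - 1) : ℝ)
           - (1 / 2 : ℝ) ^ (n - 4) * ((n - 4).choose (i - 1) : ℝ))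
    (hΔp₂ : ∀ i : ℕ, l ≤ i → i ≤ l + 2 →
      Δp i = (1 / 2 : ℝ) ^ (n - 1) * ((n - 1).choose (i - 1) : ℝ))
    (hΔp₃ : ∀ i : ℕ, l + 3 ≤ i → i ≤ n →
      Δp i = (1 / 2 : ℝ) ^ (n - 1) * ((n - 1).choose (i - 1) : ℝ)
           - (1 / 2 : ℝ) ^ (n - 4) * ((n - 4).choose (i - 4) : ℝ))
    (x y z : ℝ) (hxy : x < y) (hyz : y < z)
    (v : ℕ → ℝ)
    (hvmono : ∀ i j : ℕ, 1 ≤ i → i ≤ j → j ≤ n → v i ≤ v j)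
    (hvl : v l = y) (hvl1 : v (l + 1) = y) (hvl2 : v (l + 2) = y)
    (fx fz : ℝ → ℝ)
    (hfx_conc : ConcaveOn ℝ (Set.Ici (0 : ℝ)) fx)
    (hfx_anti : AntitoneOn fx (Set.Ici (0 : ℝ)))
    (hfz_conc : ConcaveOn ℝ (Set.Ici (0 : ℝ)) fz)
    (hfz_anti : AntitoneOn fz (Set.Ici (0 : ℝ))) :
    0 ≤ ∑ i ∈ Finset.Icc 1 n, Δp i * fx |x - v i| ∨
    0 ≤ ∑ i ∈ Finset.Icc 1 n, Δp i * fz |z - v i| := by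
  classical
  obtain ⟨m, rfl⟩ : ∃ m, n = m + 4 := ⟨n - 4, by omega⟩
  have e1 : m + 4 - 1 = m + 3 := by omega
  have e4 : m + 4 - 4 = m := by omega
  rw [e1, e4] at hΔp₁
  rw [e1] at hΔp₂
  rw [e1, e4] at hΔp₃
  set c1 : ℝ := (1/2 : ℝ)^(m+3) with hc1
  set c4 : ℝ := (1/2 : ℝ)^m with hc4
  have hIcc : Finset.Icc 1 (m+4) = Ioc 0 (m+4) := by ext i; simp; omega
  rw [hIcc]
  -- basic cast facts
  have hc1pos : (0:ℝ) < c1 := by rw [hc1]; positivity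
  have hrel : c4 = 8 * c1 := by rw [hc1, hc4, pow_add]; ring
  have hfull1 : (hdsum (m+3) (m+4) : ℝ) = 2^(m+3) := by
    have h := hdsum_full (m+3)
    have he : m+3+1 = m+4 := by omega
    rw [he] at h
    exact_mod_cast h
  have hfull4 : (hdsum m (m+1) : ℝ) = 2^m := by exact_mod_cast hdsum_full m
  have hone1 : c1 * (2:ℝ)^(m+3) = 1 := by rw [hc1, ← mul_pow]; norm_num
  have hone4 : c4 * (2:ℝ)^m = 1 := by rw [hc4, ← mul_pow]; norm_num
  -- head sums
  have headEq : ∀ k, k ≤ l - 1 → ∑ i ∈ Ioc 0 k, Δp i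
      = c1 * (hdsum (m+3) k : ℝ) - c4 * (hdsum m k : ℝ) := by
    intro k hk
    have hrw : ∀ i ∈ Ioc 0 k, Δp i
        = c1 * ((m+3).choose (i-1) : ℝ) - c4 * ((m).choose (i-1) : ℝ) := by
      intro i hi
      simp only [mem_Ioc] at hi
      exact hΔp₁ i (by omega) (by omega)
    rw [sum_congr rfl hrw, sum_sub_distrib, ← mul_sum, ← mul_sum]
    rw [sum_choose_Ioc (m+3) 0 k 1 (by omega) (by omega)]
    rw [sum_choose_Ioc m 0 k 1 (by omega) (by omega)]
    have ek : k+1-1 = k := by omega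
    have e0 : 0+1-1 = 0 := by omega
    rw [ek, e0]
    have hz3 : (hdsum (m+3) 0 : ℝ) = 0 := by simp [hdsum]
    have hz4 : (hdsum m 0 : ℝ) = 0 := by simp [hdsum]
    rw [hz3, hz4]
    ring
  have factS0 : ∑ i ∈ Ioc 0 (m+4), Δp i = 0 := by
    have hs1 : (∑ i ∈ Ioc 0 (l-1), Δp i) + ∑ i ∈ Ioc (l-1) (l+2), Δp i
        = ∑ i ∈ Ioc 0 (l+2), Δp i :=
      sum_Ioc_consecutive _ (by omega) (by omega)
    have hs2 : (∑ i ∈ Ioc 0 (l+2), Δp i) + ∑ i ∈ Ioc (l+2) (m+4), Δp i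
        = ∑ i ∈ Ioc 0 (m+4), Δp i :=
      sum_Ioc_consecutive _ (by omega) (by omega)
    have E1 := headEq (l-1) (le_refl _)
    have E2 : ∑ i ∈ Ioc (l-1) (l+2), Δp i
        = c1 * ((hdsum (m+3) (l+2) : ℝ) - (hdsum (m+3) (l-1) : ℝ)) := by
      have hrw : ∀ i ∈ Ioc (l-1) (l+2), Δp i = c1 * ((m+3).choose (i-1) : ℝ) := by
        intro i hi
        simp only [mem_Ioc] at hi
        exact hΔp₂ i (by omega) (by omega)
      rw [sum_congr rfl hrw, ← mul_sum]
      rw [sum_choose_Ioc (m+3) (l-1) (l+2) 1 (by omega) (by omega)]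
      have ea : l+2+1-1 = l+2 := by omega
      have eb : l-1+1-1 = l-1 := by omega
      rw [ea, eb]
    have E3 : ∑ i ∈ Ioc (l+2) (m+4), Δp i
        = c1 * ((hdsum (m+3) (m+4) : ℝ) - (hdsum (m+3) (l+2) : ℝ))
          - c4 * ((hdsum m (m+1) : ℝ) - (hdsum m (l-1) : ℝ)) := by
      have hrw : ∀ i ∈ Ioc (l+2) (m+4), Δp i
          = c1 * ((m+3).choose (i-1) : ℝ) - c4 * ((m).choose (i-4) : ℝ) := by
        intro i hi
        simp only [mem_Ioc] at hi
        exact hΔp₃ i (by omega) (by omega)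
      rw [sum_congr rfl hrw, sum_sub_distrib, ← mul_sum, ← mul_sum]
      rw [sum_choose_Ioc (m+3) (l+2) (m+4) 1 (by omega) (by omega)]
      rw [sum_choose_Ioc m (l+2) (m+4) 4 (by omega) (by omega)]
      have ea : m+4+1-1 = m+4 := by omega
      have eb : l+2+1-1 = l+2 := by omega
      have ec : m+4+1-4 = m+1 := by omega
      have ed : l+2+1-4 = l-1 := by omega
      rw [ea, eb, ec, ed]
    have := hs2
    rw [← hs1, E1, E2, E3] at this
    rw [← this, hfull1, hfull4]
    linarith [hone1, hone4]
  have factH : ∀ k, 1 ≤ k → k ≤ l - 1 → 0 ≤ ∑ i ∈ Ioc k (m+4), Δp i := by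
    intro k hk1 hk2
    have hsplit : (∑ i ∈ Ioc 0 k, Δp i) + ∑ i ∈ Ioc k (m+4), Δp i
        = ∑ i ∈ Ioc 0 (m+4), Δp i :=
      sum_Ioc_consecutive _ (by omega) (by omega)
    have hhead : ∑ i ∈ Ioc 0 k, Δp i ≤ 0 := by
      rw [headEq k hk2]
      have key : (hdsum (m+3) k : ℝ) ≤ 8 * (hdsum m k : ℝ) := by
        exact_mod_cast hdsum3_le m k
      have h2 := mul_le_mul_of_nonneg_left key hc1pos.le
      have h3 : c4 * (hdsum m k : ℝ) = c1 * (8 * (hdsum m k : ℝ)) := by rw [hrel]; ring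
      linarith [h2, h3]
    rw [factS0] at hsplit
    linarith
  have factT : ∀ k, l+2 ≤ k → k ≤ m+3 → ∑ i ∈ Ioc k (m+4), Δp i ≤ 0 := by
    intro k hk2 hk3
    have hrw : ∀ i ∈ Ioc k (m+4), Δp i
        = c1 * ((m+3).choose (i-1) : ℝ) - c4 * ((m).choose (i-4) : ℝ) := by
      intro i hi
      simp only [mem_Ioc] at hi
      exact hΔp₃ i (by omega) (by omega)
    rw [sum_congr rfl hrw, sum_sub_distrib, ← mul_sum, ← mul_sum]
    rw [sum_choose_Ioc (m+3) k (m+4) 1 (by omega) (by omega)]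
    rw [sum_choose_Ioc m k (m+4) 4 (by omega) (by omega)]
    have ea : m+4+1-1 = m+4 := by omega
    have eb : k+1-1 = k := by omega
    have ec : m+4+1-4 = m+1 := by omega
    have ed : k+1-4 = k-3 := by omega
    rw [ea, eb, ec, ed, hfull1, hfull4]
    have key : 8 * (hdsum m (k-3) : ℝ) ≤ (hdsum (m+3) k : ℝ) := by
      have h := hdsum3_ge m (k-3)
      have hkk : k - 3 + 3 = k := by omega
      rw [hkk] at h
      exact_mod_cast h
    have h2 := mul_le_mul_of_nonneg_left key hc1pos.le
    have h3 : c4 * (hdsum m (k-3) : ℝ) = c1 * (8 * (hdsum m (k-3) : ℝ)) := by rw [hrel]; ring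
    have h4 : c1 * ((2:ℝ)^(m+3) - (hdsum (m+3) k : ℝ)) - c4 * ((2:ℝ)^m - (hdsum m (k-3) : ℝ))
        = (c1 * (2:ℝ)^(m+3) - c4 * (2:ℝ)^m)
          + (c4 * (hdsum m (k-3) : ℝ) - c1 * (hdsum (m+3) k : ℝ)) := by ring
    rw [h4]
    linarith [h2, h3, hone1, hone4]
  -- Abel summation setup
  have e34 : m+3+1 = m+4 := by omega
  have factS0' : ∑ i ∈ Ioc 0 (m+3+1), Δp i = 0 := by rw [e34]; exact factS0
  have habel : ∀ g : ℕ → ℝ, ∑ i ∈ Ioc 0 (m+4), Δp i * g i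
      = ∑ k ∈ Ioc 0 (m+3), (∑ i ∈ Ioc k (m+4), Δp i) * (g (k+1) - g k) := by
    intro g
    have h := abel_sum (m+3) Δp g factS0'
    rw [e34] at h
    exact h
  set Sf : ℕ → ℝ := fun k => ∑ i ∈ Ioc k (m+4), Δp i with hSf
  set aa : ℕ → ℝ := fun k => if l ≤ k ∧ k ≤ l + 1 then 0 else Sf k with haa
  set dv : ℕ → ℝ := fun k => v (k+1) - v k with hdv
  have hswap : ∀ (δf : ℕ → ℝ), (∀ k, l ≤ k → k ≤ l+1 → δf k = 0) →
      ∑ k ∈ Ioc 0 (m+3), Sf k * δf k = ∑ k ∈ Ioc 0 (m+3), aa k * δf k := by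
    intro δf hmid
    apply sum_congr rfl
    intro k _
    by_cases hk : l ≤ k ∧ k ≤ l + 1
    · rw [hmid k hk.1 hk.2, haa]
      simp [hk]
    · simp only [haa, if_neg hk]
  have hdvnn : ∀ k ∈ Ioc 0 (m+3), 0 ≤ dv k := by
    intro k hk
    simp only [mem_Ioc] at hk
    have := hvmono k (k+1) (by omega) (by omega) (by omega)
    simp only [hdv]
    linarith
  have hdvl : dv l = 0 := by simp only [hdv]; rw [hvl1, hvl]; ring
  have hdvl1 : dv (l+1) = 0 := by
    simp only [hdv]
    rw [show l+1+1 = l+2 by omega, hvl2, hvl1]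
    ring
  have hMv : ∑ k ∈ Ioc 0 (m+3), aa k * dv k = ∑ i ∈ Ioc 0 (m+4), Δp i * v i := by
    rw [habel v, ← hswap dv (by intro k h1 h2; have : k = l ∨ k = l+1 := by omega
                                rcases this with h | h <;> rw [h]
                                · exact hdvl
                                · exact hdvl1)]
  have haaL : ∀ k ∈ Ioc 0 (m+3), k ≤ l + 1 → 0 ≤ aa k := by
    intro k hk hkl
    simp only [mem_Ioc] at hk
    by_cases hkk : l ≤ k ∧ k ≤ l + 1
    · simp [haa, hkk]
    · simp only [haa, if_neg hkk]
      exact factH k (by omega) (by omega)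
  have haaR : ∀ k ∈ Ioc 0 (m+3), ¬ (k ≤ l + 1) → aa k ≤ 0 := by
    intro k hk hkl
    simp only [mem_Ioc] at hk
    simp only [haa, if_neg (by omega : ¬ (l ≤ k ∧ k ≤ l + 1))]
    exact factT k (by omega) (by omega)
  by_cases hM : 0 ≤ ∑ i ∈ Ioc 0 (m+4), Δp i * v i
  · right
    have habelz : ∑ i ∈ Ioc 0 (m+4), Δp i * fz |z - v i|
        = ∑ k ∈ Ioc 0 (m+3), Sf k * (fz |z - v (k+1)| - fz |z - v k|) :=
      habel (fun i => fz |z - v i|)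
    have hmidz : ∀ k, l ≤ k → k ≤ l+1 → fz |z - v (k+1)| - fz |z - v k| = 0 := by
      intro k h1 h2
      have hkl : k = l ∨ k = l+1 := by omega
      rcases hkl with h | h <;> subst h
      · rw [hvl1, hvl]; ring
      · rw [show l+1+1 = l+2 by omega, hvl2, hvl1]; ring
    have hz1 : ∑ k ∈ Ioc 0 (m+3), Sf k * (fz |z - v (k+1)| - fz |z - v k|)
        = ∑ k ∈ Ioc 0 (m+3), aa k * (fz |z - v (k+1)| - fz |z - v k|) :=
      hswap (fun k => fz |z - v (k+1)| - fz |z - v k|) hmidz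
    rw [habelz, hz1]
    have hLd : ∀ k ∈ Ioc 0 (m+3), k ≤ l+1 → 0 ≤ fz |z - v (k+1)| - fz |z - v k| := by
      intro k hk hkl
      simp only [mem_Ioc] at hk
      have hvk1 : v (k+1) ≤ y := by
        rw [← hvl2]
        exact hvmono (k+1) (l+2) (by omega) (by omega) (by omega)
      have hvkk : v k ≤ v (k+1) := hvmono k (k+1) (by omega) (by omega) (by omega)
      have ha1 : |z - v (k+1)| = z - v (k+1) := abs_of_nonneg (by linarith)
      have ha2 : |z - v k| = z - v k := abs_of_nonneg (by linarith)
      rw [ha1, ha2]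
      have := hfz_anti (Set.mem_Ici.2 (by linarith : (0:ℝ) ≤ z - v (k+1)))
                       (Set.mem_Ici.2 (by linarith : (0:ℝ) ≤ z - v k))
                       (by linarith)
      linarith
    have hpair : ∀ k ∈ Ioc 0 (m+3), k ≤ l+1 → ∀ j ∈ Ioc 0 (m+3), ¬ (j ≤ l+1) →
        (fz |z - v (j+1)| - fz |z - v j|) * dv k
          ≤ (fz |z - v (k+1)| - fz |z - v k|) * dv j := by
      intro k hk hkP j hj hjP
      simp only [mem_Ioc] at hk hj
      have h1 : v k ≤ v (k+1) := hvmono k (k+1) (by omega) (by omega) (by omega)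
      have h2 : v (k+1) ≤ v j := hvmono (k+1) j (by omega) (by omega) (by omega)
      have h3 : v j ≤ v (j+1) := hvmono j (j+1) (by omega) (by omega) (by omega)
      have hcc := conc4 fz hfz_conc hfz_anti z h1 h2 h3
      simp only [hdv]
      linarith [hcc]
    have hzz : ∀ k ∈ Ioc 0 (m+3), dv k = 0 → fz |z - v (k+1)| - fz |z - v k| = 0 := by
      intro k hk h0
      simp only [hdv] at h0
      have hvv : v (k+1) = v k := by linarith
      rw [hvv]
      ring
    have hsum : 0 ≤ ∑ k ∈ Ioc 0 (m+3), aa k * dv k := by rw [hMv]; exact hM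
    exact core (Ioc 0 (m+3)) (fun k => k ≤ l+1) aa
      (fun k => fz |z - v (k+1)| - fz |z - v k|) dv hdvnn hzz haaL hLd haaR hpair hsum
  · left
    push_neg at hM
    have habelx : ∑ i ∈ Ioc 0 (m+4), Δp i * fx |x - v i|
        = ∑ k ∈ Ioc 0 (m+3), Sf k * (fx |x - v (k+1)| - fx |x - v k|) :=
      habel (fun i => fx |x - v i|)
    have hmidx : ∀ k, l ≤ k → k ≤ l+1 → fx |x - v (k+1)| - fx |x - v k| = 0 := by
      intro k h1 h2
      have hkl : k = l ∨ k = l+1 := by omega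
      rcases hkl with h | h <;> subst h
      · rw [hvl1, hvl]; ring
      · rw [show l+1+1 = l+2 by omega, hvl2, hvl1]; ring
    have hx1 : ∑ k ∈ Ioc 0 (m+3), Sf k * (fx |x - v (k+1)| - fx |x - v k|)
        = ∑ k ∈ Ioc 0 (m+3), aa k * (fx |x - v (k+1)| - fx |x - v k|) :=
      hswap (fun k => fx |x - v (k+1)| - fx |x - v k|) hmidx
    have hx2 : ∑ k ∈ Ioc 0 (m+3), aa k * (fx |x - v (k+1)| - fx |x - v k|)
        = ∑ k ∈ Ioc 0 (m+3), (- aa k) * (fx |x - v k| - fx |x - v (k+1)|) := by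
      apply sum_congr rfl
      intro k _
      ring
    rw [habelx, hx1, hx2]
    have hLdx : ∀ k ∈ Ioc 0 (m+3), l ≤ k → 0 ≤ fx |x - v k| - fx |x - v (k+1)| := by
      intro k hk hkl
      simp only [mem_Ioc] at hk
      by_cases hk2 : k ≤ l+1
      · have := hmidx k hkl hk2
        linarith
      · have hyk : y ≤ v k := by
          rw [← hvl2]
          exact hvmono (l+2) k (by omega) (by omega) (by omega)
        have hvkk : v k ≤ v (k+1) := hvmono k (k+1) (by omega) (by omega) (by omega)
        have ha1 : |x - v k| = v k - x := by
          rw [abs_of_nonpos (by linarith)]; ring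
        have ha2 : |x - v (k+1)| = v (k+1) - x := by
          rw [abs_of_nonpos (by linarith)]; ring
        rw [ha1, ha2]
        have := hfx_anti (Set.mem_Ici.2 (by linarith : (0:ℝ) ≤ v k - x))
                         (Set.mem_Ici.2 (by linarith : (0:ℝ) ≤ v (k+1) - x))
                         (by linarith)
        linarith
    have hLax : ∀ k ∈ Ioc 0 (m+3), l ≤ k → 0 ≤ - aa k := by
      intro k hk hkl
      by_cases hk2 : k ≤ l+1
      · have : aa k = 0 := by
          simp only [haa, if_pos (show l ≤ k ∧ k ≤ l+1 from ⟨hkl, hk2⟩)]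
        rw [this]; simp
      · linarith [haaR k hk hk2]
    have hRax : ∀ k ∈ Ioc 0 (m+3), ¬ (l ≤ k) → - aa k ≤ 0 := by
      intro k hk hkl
      have := haaL k hk (by omega)
      linarith
    have hpairx : ∀ k ∈ Ioc 0 (m+3), l ≤ k → ∀ j ∈ Ioc 0 (m+3), ¬ (l ≤ j) →
        (fx |x - v j| - fx |x - v (j+1)|) * dv k
          ≤ (fx |x - v k| - fx |x - v (k+1)|) * dv j := by
      intro k hk hkP j hj hjP
      simp only [mem_Ioc] at hk hj
      have h1 : v j ≤ v (j+1) := hvmono j (j+1) (by omega) (by omega) (by omega)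
      have h2 : v (j+1) ≤ v k := hvmono (j+1) k (by omega) (by omega) (by omega)
      have h3 : v k ≤ v (k+1) := hvmono k (k+1) (by omega) (by omega) (by omega)
      have hcc := conc4 fx hfx_conc hfx_anti x h1 h2 h3
      simp only [hdv]
      linarith [hcc]
    have hzzx : ∀ k ∈ Ioc 0 (m+3), dv k = 0 → fx |x - v k| - fx |x - v (k+1)| = 0 := by
      intro k hk h0
      simp only [hdv] at h0
      have hvv : v (k+1) = v k := by linarith
      rw [hvv]
      ring
    have hsumx : 0 ≤ ∑ k ∈ Ioc 0 (m+3), (- aa k) * dv k := by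
      have hneg : ∑ k ∈ Ioc 0 (m+3), (- aa k) * dv k
          = - ∑ k ∈ Ioc 0 (m+3), aa k * dv k := by simp [neg_mul]
      rw [hneg, hMv]
      linarith
    exact core (Ioc 0 (m+3)) (fun k => l ≤ k) (fun k => - aa k)
      (fun k => fx |x - v k| - fx |x - v (k+1)|) dv hdvnn hzzx hLax hLdx hRax hpairx hsumx
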